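/- Let 0 < ε < 1 be a real number, and define g(s) = 1 + ε·s − 2s·(√((1 + 1/s)(1 + ε)) − 1) for real s > 0. Then g is nonincreasing on the interval (0, 1/ε]: for all real s1, s2 with 0 < s1 ≤ s2 ≤ 1/ε, one has g(s2) ≤ g(s1). -/

import Mathlib

lemma key_bound (ε s : ℝ) (hε0 : 0 < ε) (hs : 0 < s) (hs2 : s ≤ 1 / ε) :
    (ε + 2) * Real.sqrt (s * (s + 1)) ≤ Real.sqrt (1 + ε) * (2 * s + 1) := by
  have hεs : ε * s ≤ 1 := by
    rw [le_div_iff₀ hε0] at hs2; linarith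
  have ha : (0:ℝ) ≤ s * (s + 1) := by positivity
  have hA : Real.sqrt (s * (s + 1)) ^ 2 = s * (s + 1) := Real.sq_sqrt ha
  have hC : Real.sqrt (1 + ε) ^ 2 = 1 + ε := Real.sq_sqrt (by linarith)
  have h1 : (0:ℝ) ≤ (ε + 2) * Real.sqrt (s * (s + 1)) := by positivity
  have h2 : (0:ℝ) ≤ Real.sqrt (1 + ε) * (2 * s + 1) := by positivity
  have hsq : ((ε + 2) * Real.sqrt (s * (s + 1))) ^ 2 ≤
      (Real.sqrt (1 + ε) * (2 * s + 1)) ^ 2 := by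
    have expand1 : ((ε + 2) * Real.sqrt (s * (s + 1))) ^ 2 =
        (ε + 2) ^ 2 * (s * (s + 1)) := by rw [mul_pow, hA]
    have expand2 : (Real.sqrt (1 + ε) * (2 * s + 1)) ^ 2 =
        (1 + ε) * (2 * s + 1) ^ 2 := by rw [mul_pow, hC]
    rw [expand1, expand2]
    nlinarith [mul_le_mul hεs hεs (by positivity) (by norm_num : (0:ℝ) ≤ 1),
      hε0.le, hs.le, mul_nonneg hε0.le hs.le]
  nlinarith [hsq, h1, h2]

theorem stmt_17 (ε : ℝ) (hε0 : 0 < ε) (hε1 : ε < 1) :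
    ∀ s1 s2 : ℝ, 0 < s1 → s1 ≤ s2 → s2 ≤ 1 / ε →
      1 + ε * s2 - 2 * s2 * (Real.sqrt ((1 + 1 / s2) * (1 + ε)) - 1) ≤
        1 + ε * s1 - 2 * s1 * (Real.sqrt ((1 + 1 / s1) * (1 + ε)) - 1) := by
  intro s1 s2 hs1 h12 h2e
  have hs2 : 0 < s2 := lt_of_lt_of_le hs1 h12
  set a := Real.sqrt (s1 * (s1 + 1)) with ha_def
  set b := Real.sqrt (s2 * (s2 + 1)) with hb_def
  set c := Real.sqrt (1 + ε) with hc_def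
  have ha0 : 0 < a := Real.sqrt_pos.mpr (by positivity)
  have hb0 : 0 < b := Real.sqrt_pos.mpr (by positivity)
  have hc0 : 0 < c := Real.sqrt_pos.mpr (by linarith)
  have haa : a ^ 2 = s1 * (s1 + 1) := Real.sq_sqrt (by positivity)
  have hbb : b ^ 2 = s2 * (s2 + 1) := Real.sq_sqrt (by positivity)
  -- rewrite s * sqrt((1+1/s)(1+ε)) = sqrt(s(s+1)) * sqrt(1+ε)
  have rw1 : s1 * Real.sqrt ((1 + 1 / s1) * (1 + ε)) = a * c := by
    rw [ha_def, hc_def, ← Real.sqrt_mul (by positivity : (0:ℝ) ≤ s1 * (s1 + 1)),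
      show s1 * (s1 + 1) * (1 + ε) = s1 ^ 2 * ((1 + 1 / s1) * (1 + ε)) by
        field_simp,
      Real.sqrt_mul (sq_nonneg s1), Real.sqrt_sq hs1.le]
  have rw2 : s2 * Real.sqrt ((1 + 1 / s2) * (1 + ε)) = b * c := by
    rw [hb_def, hc_def, ← Real.sqrt_mul (by positivity : (0:ℝ) ≤ s2 * (s2 + 1)),
      show s2 * (s2 + 1) * (1 + ε) = s2 ^ 2 * ((1 + 1 / s2) * (1 + ε)) by
        field_simp,
      Real.sqrt_mul (sq_nonneg s2), Real.sqrt_sq hs2.le]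
  have key1 : (ε + 2) * a ≤ c * (2 * s1 + 1) := key_bound ε s1 hε0 hs1 (le_trans h12 h2e)
  have key2 : (ε + 2) * b ≤ c * (2 * s2 + 1) := key_bound ε s2 hε0 hs2 h2e
  -- main inequality: (ε+2)(s2 - s1) ≤ 2 c (b - a)
  have hmain : (ε + 2) * (s2 - s1) ≤ 2 * c * (b - a) := by
    have hab : 0 < a + b := by linarith
    have hmul : (ε + 2) * (s2 - s1) * (a + b) ≤ 2 * c * (b - a) * (a + b) := by
      have hdiff : (b - a) * (a + b) = (s2 - s1) * (s1 + s2 + 1) := by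
        nlinarith [haa, hbb]
      calc (ε + 2) * (s2 - s1) * (a + b)
          = ((ε + 2) * a + (ε + 2) * b) * (s2 - s1) := by ring
        _ ≤ (c * (2 * s1 + 1) + c * (2 * s2 + 1)) * (s2 - s1) := by
            apply mul_le_mul_of_nonneg_right (by linarith) (by linarith)
        _ = 2 * c * ((s2 - s1) * (s1 + s2 + 1)) := by ring
        _ = 2 * c * (b - a) * (a + b) := by rw [mul_assoc (2*c) (b-a) (a+b), hdiff]
    exact le_of_mul_le_mul_right hmul hab
  have expand1 : 1 + ε * s1 - 2 * s1 * (Real.sqrt ((1 + 1 / s1) * (1 + ε)) - 1)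
      = 1 + ε * s1 + 2 * s1 - 2 * (a * c) := by rw [show 2 * s1 * (Real.sqrt ((1 + 1 / s1) * (1 + ε)) - 1) = 2 * (s1 * Real.sqrt ((1 + 1 / s1) * (1 + ε))) - 2 * s1 by ring, rw1]; ring
  have expand2 : 1 + ε * s2 - 2 * s2 * (Real.sqrt ((1 + 1 / s2) * (1 + ε)) - 1)
      = 1 + ε * s2 + 2 * s2 - 2 * (b * c) := by rw [show 2 * s2 * (Real.sqrt ((1 + 1 / s2) * (1 + ε)) - 1) = 2 * (s2 * Real.sqrt ((1 + 1 / s2) * (1 + ε))) - 2 * s2 by ring, rw2]; ring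
  rw [expand1, expand2]
  nlinarith [hmain]
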